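/- For every real number x ≥ 2, the prime counting function satisfies the two-sided Chebyshev-type bound: (ln 2)·x/ln x − 2 ≤ π(x) ≤ 4·(ln 2)·x/ln x + log₂ x. -/

import Mathlib

open Finset Nat

lemma pc_card (n : ℕ) : n.primeCounting = #({p ∈ range (n+1) | p.Prime}) := by
  rw [Nat.primeCounting, ← Nat.primesBelow_card_eq_primeCounting', Nat.primesBelow]

-- primes in (n, 2n]
lemma card_split (n : ℕ) :
    (2*n).primeCounting = n.primeCounting + #({p ∈ Ico (n+1) (2*n+1) | p.Prime}) := by
  rw [pc_card, pc_card, ← Ico_zero_eq_range,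
    ← Ico_union_Ico_eq_Ico (Nat.zero_le (n+1)) (by omega), filter_union, card_union_of_disjoint]
  · rw [Ico_zero_eq_range]
  exact disjoint_filter_filter (p := Nat.Prime) (q := Nat.Prime) <| Ico_disjoint_Ico_consecutive (0:ℕ) (n+1) (2*n+1)

lemma prod_interval_dvd (n : ℕ) :
    (∏ p ∈ {p ∈ Ico (n+1) (2*n+1) | p.Prime}, p) ∣ (2*n).choose n := by
  apply Finset.prod_primes_dvd _ (fun _ hk ↦ (mem_filter.1 hk).2.prime)
  intro p hp
  rw [mem_filter, mem_Ico] at hp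
  have := hp.2.dvd_choose_add (a := n) (b := n) (by omega) (by omega) (by omega)
  rwa [← two_mul] at this

lemma dyadic_upper (n : ℕ) :
    (n+1) ^ (#({p ∈ Ico (n+1) (2*n+1) | p.Prime})) ≤ 4 ^ n := by
  calc (n+1) ^ (#({p ∈ Ico (n+1) (2*n+1) | p.Prime}))
      ≤ ∏ p ∈ {p ∈ Ico (n+1) (2*n+1) | p.Prime}, p := by
        rw [← Finset.prod_const]
        apply Finset.prod_le_prod
        · intro i _; omega
        · intro i hi; rw [mem_filter, mem_Ico] at hi; omega
    _ ≤ (2*n).choose n := Nat.le_of_dvd (Nat.choose_pos (by omega)) (prod_interval_dvd n)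
    _ ≤ (2*n+1).choose n := Nat.choose_le_choose n (by omega)
    _ ≤ 4 ^ n := Nat.choose_middle_le_pow n

lemma lower_nat (n : ℕ) (hn : 0 < n) :
    4 ^ n ≤ (2*n) ^ ((2*n).primeCounting + 1) := by
  calc 4 ^ n ≤ 2 * n * n.centralBinom := Nat.four_pow_le_two_mul_self_mul_centralBinom n hn
    _ ≤ 2 * n * (2*n) ^ ((2*n).primeCounting) := by
        apply Nat.mul_le_mul_left
        rw [← Nat.prod_pow_factorization_centralBinom n, pc_card]
        calc (∏ p ∈ Finset.range (2*n+1), p ^ (n.centralBinom).factorization p)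
            = ∏ p ∈ {p ∈ range (2*n+1) | p.Prime}, p ^ (n.centralBinom).factorization p := by
              rw [Finset.prod_filter]
              apply Finset.prod_congr rfl
              intro p _
              split
              · rfl
              · rw [Nat.factorization_eq_zero_of_not_prime _ (by assumption), pow_zero]
          _ ≤ ∏ _p ∈ {p ∈ range (2*n+1) | p.Prime}, 2*n := by
              apply Finset.prod_le_prod
              · intros; positivity
              · intro i hi
                exact Nat.pow_factorization_choose_le (by omega)
          _ = (2*n) ^ #({p ∈ range (2*n+1) | p.Prime}) := by rw [Finset.prod_const]
    _ = (2*n) ^ ((2*n).primeCounting + 1) := by ring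

lemma pc_two : Nat.primeCounting 2 = 1 := by
  rw [pc_card]; decide

lemma pc_one_le {n : ℕ} (hn : 2 ≤ n) : 1 ≤ n.primeCounting := by
  calc 1 = Nat.primeCounting 2 := pc_two.symm
    _ ≤ n.primeCounting := Nat.monotone_primeCounting hn

-- concavity-style bound:  for 1 ≤ t ≤ 2, (t-1)·log 2 ≤ log t
lemma log_lb {t : ℝ} (h1 : 1 ≤ t) (h2 : t ≤ 2) : (t - 1) * Real.log 2 ≤ Real.log t := by
  have ht : (0:ℝ) < t := by linarith
  have hA : Real.log t⁻¹ ≤ t⁻¹ - 1 := Real.log_le_sub_one_of_pos (by positivity)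
  rw [Real.log_inv] at hA
  have hB : Real.log (2 / t) ≤ 2 / t - 1 := Real.log_le_sub_one_of_pos (by positivity)
  rw [Real.log_div (by norm_num) ht.ne'] at hB
  -- hA : -log t ≤ 1/t - 1 ; hB : log 2 - log t ≤ 2/t - 1
  rcases le_total (t * Real.log 2) 1 with h | h
  · -- log t ≥ 1 - 1/t ≥ (t-1) log 2
    have h1t : 1 - t⁻¹ ≤ Real.log t := by linarith
    rw [inv_eq_one_div] at h1t
    calc (t - 1) * Real.log 2 ≤ (t - 1) * (1 / t) :=
          mul_le_mul_of_nonneg_left ((le_div_iff₀ ht).2 (by linarith)) (by linarith)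
      _ = 1 - 1 / t := by field_simp
      _ ≤ Real.log t := h1t
  · have h2t : Real.log 2 - (2 / t - 1) ≤ Real.log t := by linarith
    have key : (t - 1) * Real.log 2 ≤ Real.log 2 - (2 / t - 1) := by
      rw [← sub_nonneg,
        show Real.log 2 - (2 / t - 1) - (t - 1) * Real.log 2
            = (2 - t) * (t * Real.log 2 - 1) / t by field_simp; ring]
      exact div_nonneg (mul_nonneg (by linarith) (by linarith)) ht.le
    linarith

-- x/log x monotone for 3 ≤ m ≤ x  (needs log m ≥ 1)
lemma div_log_mono {m x : ℝ} (hm : 3 ≤ m) (hmx : m ≤ x) :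
    m / Real.log m ≥ 0 ∧ m / Real.log m ≤ x / Real.log x := by
  have hm0 : (0:ℝ) < m := by linarith
  have hx0 : (0:ℝ) < x := by linarith
  have hlm : 1 ≤ Real.log m := by
    rw [Real.le_log_iff_exp_le hm0]
    calc Real.exp 1 ≤ 2.7182818286 := Real.exp_one_lt_d9.le
      _ ≤ m := by linarith
  have hlx : 1 ≤ Real.log x := le_trans hlm (Real.log_le_log hm0 hmx)
  constructor
  · positivity
  · rw [div_le_div_iff₀ (by linarith) (by linarith)]
    have h1 : Real.log (x / m) ≤ x / m - 1 := Real.log_le_sub_one_of_pos (by positivity)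
    rw [Real.log_div hx0.ne' hm0.ne'] at h1
    have h2 : m * (Real.log x - Real.log m) ≤ x - m := by
      have := mul_le_mul_of_nonneg_left h1 hm0.le
      calc m * (Real.log x - Real.log m) ≤ m * (x / m - 1) := this
       _ = x - m := by field_simp
    nlinarith [Real.log_le_log hm0 hmx]

lemma pc_le {n : ℕ} (hn : 2 ≤ n) : (n.primeCounting : ℝ) ≤ (n + 2) / 2 := by
  have h := Nat.primeCounting'_add_le (a := 2) (k := 3) (by norm_num) (by norm_num) (n - 2)
  have h3 : 3 + (n - 2) = n + 1 := by omega
  rw [h3] at h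
  have hpi : n.primeCounting ≤ 2 + (n-2)/2 := by
    rw [Nat.primeCounting]
    calc Nat.primeCounting' (n+1) ≤ Nat.primeCounting' 3 + Nat.totient 2 * ((n-2)/2 + 1) := h
      _ = 2 + (n-2)/2 := by rw [show Nat.primeCounting' 3 = 1 by decide, Nat.totient_two]; ring
  have := (Nat.cast_le (α := ℝ)).2 hpi
  have hd : (((n-2)/2 : ℕ) : ℝ) ≤ ((n:ℝ) - 2)/2 := by
    have h1 := Nat.cast_div_le (m := n - 2) (n := 2) (α := ℝ)
    have h2 : ((n - 2 : ℕ) : ℝ) = (n:ℝ) - 2 := by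
      have : (2:ℕ) ≤ n := hn
      push_cast [this]; ring
    rw [h2] at h1
    simpa using h1
  push_cast at this
  linarith

lemma log4 : Real.log 4 = 2 * Real.log 2 := by
  rw [show (4:ℝ) = 2^2 by norm_num, Real.log_pow]; push_cast; ring

lemma dyadic_real {m : ℕ} (hm : 2 ≤ m) :
    ((2*m).primeCounting : ℝ) ≤ m.primeCounting + 2 * Real.log 2 * m / Real.log m := by
  have hm0 : (0:ℝ) < m := by exact_mod_cast by omega
  have hlm : 0 < Real.log m := Real.log_pos (by exact_mod_cast by omega)
  have h := dyadic_upper m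
  have hc : ((m:ℝ)+1) ^ (#({p ∈ Ico (m+1) (2*m+1) | p.Prime})) ≤ 4 ^ m := by
    exact_mod_cast h
  have hl := Real.log_le_log (by positivity) hc
  rw [Real.log_pow, Real.log_pow, log4] at hl
  have hmono : Real.log m ≤ Real.log ((m:ℝ)+1) := Real.log_le_log hm0 (by linarith)
  have hcard : (#({p ∈ Ico (m+1) (2*m+1) | p.Prime}) : ℝ) ≤ 2 * Real.log 2 * m / Real.log m := by
    rw [le_div_iff₀ hlm]
    calc (#({p ∈ Ico (m+1) (2*m+1) | p.Prime}) : ℝ) * Real.log m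
        ≤ (#({p ∈ Ico (m+1) (2*m+1) | p.Prime}) : ℝ) * Real.log ((m:ℝ)+1) := by
          apply mul_le_mul_of_nonneg_left hmono (by positivity)
      _ ≤ (m:ℝ) * (2 * Real.log 2) := hl
      _ = 2 * Real.log 2 * m := by ring
  have := card_split m
  have : ((2*m).primeCounting : ℝ) = m.primeCounting + (#({p ∈ Ico (m+1) (2*m+1) | p.Prime}) : ℝ) := by
    exact_mod_cast congrArg (Nat.cast (R := ℝ)) this
  linarith

lemma lower_real {n : ℕ} (hn : 1 ≤ n) :
    2 * n * Real.log 2 ≤ (((2*n).primeCounting : ℝ) + 1) * Real.log (2*n) := by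
  have h := lower_nat n hn
  have hc : ((4:ℝ) ^ n) ≤ ((2*n:ℕ):ℝ) ^ ((2*n).primeCounting + 1) := by
    exact_mod_cast h
  have hl := Real.log_le_log (by positivity) hc
  rw [Real.log_pow, Real.log_pow, log4] at hl
  push_cast at hl ⊢
  linarith

lemma upper_nat : ∀ n : ℕ, 2 ≤ n →
    (n.primeCounting : ℝ) ≤ 4 * Real.log 2 * n / Real.log n + Real.logb 2 n := by
  intro n
  induction n using Nat.strong_induction_on with
  | _ n ih =>
  intro hn
  have hn0 : (0:ℝ) < n := by exact_mod_cast by omega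
  have hln : 0 < Real.log n := Real.log_pos (by exact_mod_cast by omega)
  have hl2 : 0 < Real.log 2 := Real.log_pos (by norm_num)
  have hlogb : 0 ≤ Real.logb 2 n := Real.logb_nonneg (by norm_num) (by exact_mod_cast (by omega : 1 ≤ n))
  by_cases h32 : n < 32
  · -- base case : π n ≤ (n+2)/2 ≤ 4 log2 n / log n
    have h1 := pc_le hn
    have key : ((n:ℝ) + 2) / 2 ≤ 4 * Real.log 2 * n / Real.log n := by
      rw [div_le_div_iff₀ (by norm_num) hln]
      rcases le_or_gt n 4 with h4 | h4
      · have : Real.log n ≤ 2 * Real.log 2 := by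
          calc Real.log n ≤ Real.log 4 := Real.log_le_log hn0 (by exact_mod_cast h4)
            _ = 2 * Real.log 2 := by
              rw [show (4:ℝ) = 2^2 by norm_num, Real.log_pow]; push_cast; ring
        have hn2 : (2:ℝ) ≤ n := by exact_mod_cast hn
        nlinarith
      · have : Real.log n ≤ 5 * Real.log 2 := by
          calc Real.log n ≤ Real.log 32 := Real.log_le_log hn0 (by exact_mod_cast by omega)
            _ = 5 * Real.log 2 := by
              rw [show (32:ℝ) = 2^5 by norm_num, Real.log_pow]; push_cast; ring
        have hn4 : (4:ℝ) ≤ n := by exact_mod_cast h4.le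
        nlinarith
    linarith
  · -- inductive step
    push_neg at h32
    set m := (n+1)/2 with hm_def
    have hm16 : 16 ≤ m := by omega
    have hmlt : m < n := by omega
    have hn2m : n ≤ 2*m := by omega
    have h2mn : 2*m ≤ n + 1 := by omega
    have ihm := ih m hmlt (by omega)
    have hd := dyadic_real (m := m) (by omega)
    have hmono : (n.primeCounting : ℝ) ≤ ((2*m).primeCounting : ℝ) := by
      exact_mod_cast Nat.monotone_primeCounting hn2m
    have hm0 : (0:ℝ) < m := by exact_mod_cast by omega
    have hlm : 0 < Real.log m := Real.log_pos (by exact_mod_cast by omega)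
    have hlm4 : 4 * Real.log 2 ≤ Real.log m := by
      calc 4 * Real.log 2 = Real.log 16 := by
            rw [show (16:ℝ) = 2^4 by norm_num, Real.log_pow]; push_cast; ring
        _ ≤ Real.log m := Real.log_le_log (by norm_num) (by exact_mod_cast hm16)
    have hlognm : Real.log n ≤ Real.log 2 + Real.log m := by
      calc Real.log n ≤ Real.log (2*m : ℝ) := by
            apply Real.log_le_log hn0; exact_mod_cast hn2m
        _ = Real.log 2 + Real.log m := Real.log_mul (by norm_num) hm0.ne'
    have hn2m' : 2*(m:ℝ) - 1 ≤ n := by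
      have h' : (2*m : ℕ) ≤ n + 1 := h2mn
      have := (Nat.cast_le (α := ℝ)).2 h'
      push_cast at this
      linarith
    have hm16' : (16:ℝ) ≤ m := by exact_mod_cast hm16
    have key : 6 * Real.log 2 * m / Real.log m ≤ 4 * Real.log 2 * n / Real.log n := by
      rw [div_le_div_iff₀ hlm hln]
      nlinarith [mul_le_mul_of_nonneg_left hlognm (by positivity : (0:ℝ) ≤ 6 * Real.log 2 * m),
        mul_le_mul_of_nonneg_left hlm4 (by nlinarith : (0:ℝ) ≤ (2*(m:ℝ) - 4) * Real.log 2),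
        mul_le_mul_of_nonneg_left hn2m' (by positivity : (0:ℝ) ≤ 4 * Real.log 2 * Real.log m),
        mul_nonneg (mul_nonneg hl2.le hl2.le) (by linarith : (0:ℝ) ≤ (m:ℝ) - 8)]
    have hlogbm : Real.logb 2 m ≤ Real.logb 2 n :=
      Real.logb_le_logb_of_le (by norm_num) hm0 (by exact_mod_cast hmlt.le)
    have hcast : ((2*m : ℕ) : ℝ) = 2 * (m:ℝ) := by push_cast; ring
    calc (n.primeCounting : ℝ) ≤ ((2*m).primeCounting : ℝ) := hmono
      _ ≤ m.primeCounting + 2 * Real.log 2 * m / Real.log m := hd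
      _ ≤ (4 * Real.log 2 * m / Real.log m + Real.logb 2 m) + 2 * Real.log 2 * m / Real.log m := by
          linarith [ihm]
      _ ≤ 4 * Real.log 2 * n / Real.log n + Real.logb 2 n := by
          have h6 : 4 * Real.log 2 * m / Real.log m + 2 * Real.log 2 * m / Real.log m
              = 6 * Real.log 2 * m / Real.log m := by field_simp; ring
          linarith

/-- For every real `x ≥ 2`, the prime counting function satisfies the Chebyshev-type
two-sided bound `(ln 2)·x/ln x − 2 ≤ π(x) ≤ 4·(ln 2)·x/ln x + log₂ x`, where `π(x)`
is the number of primes `p ≤ x`. -/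
theorem chebyshev_type_bound (x : ℝ) (hx : 2 ≤ x) :
    Real.log 2 * x / Real.log x - 2 ≤ (Nat.primeCounting ⌊x⌋₊ : ℝ) ∧
      (Nat.primeCounting ⌊x⌋₊ : ℝ) ≤ 4 * Real.log 2 * x / Real.log x + Real.logb 2 x := by
  have hx0 : (0:ℝ) < x := by linarith
  set m := ⌊x⌋₊ with hm_def
  have hm2 : 2 ≤ m := Nat.le_floor (by exact_mod_cast hx)
  have hmx : (m:ℝ) ≤ x := Nat.floor_le hx0.le
  have hxm1 : x < m + 1 := Nat.lt_floor_add_one x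
  have hlx : 0 < Real.log x := Real.log_pos (by linarith)
  have hl2 : 0 < Real.log 2 := Real.log_pos (by norm_num)
  constructor
  · -- lower bound
    rcases lt_or_ge x 4 with h4 | h4
    · have hpi : (1:ℝ) ≤ (m.primeCounting : ℝ) := by exact_mod_cast pc_one_le hm2
      have hlog : x / 2 * Real.log 2 ≤ Real.log x := by
        have h := log_lb (t := x/2) (by linarith) (by linarith)
        rw [Real.log_div hx0.ne' (by norm_num)] at h
        nlinarith
      have : Real.log 2 * x / Real.log x ≤ 2 := by
        rw [div_le_iff₀ hlx]; nlinarith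
      linarith
    · set n := m / 2 with hn_def
      have hn2 : 2 ≤ n := by
        have : 4 ≤ m := Nat.le_floor (by exact_mod_cast h4)
        omega
      have h2nm : 2 * n ≤ m := by omega
      have hm2n : m ≤ 2 * n + 1 := by omega
      have hx2n : 2*(n:ℝ) ≤ x := by
        have := (Nat.cast_le (α := ℝ)).2 h2nm
        push_cast at this; linarith
      have hx2n2 : x < 2*(n:ℝ) + 2 := by
        have := (Nat.cast_le (α := ℝ)).2 hm2n
        push_cast at this; linarith
      have h2n4 : (4:ℝ) ≤ 2*(n:ℝ) := by
        have : (2:ℝ) ≤ n := by exact_mod_cast hn2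
        linarith
      have hB : 0 < Real.log (2*(n:ℝ)) := Real.log_pos (by linarith)
      have hBA : Real.log (2*(n:ℝ)) ≤ Real.log x := Real.log_le_log (by linarith) hx2n
      have h2L : 2 * Real.log 2 ≤ Real.log x := by
        calc 2 * Real.log 2 = Real.log 4 := by
              rw [show (4:ℝ) = 2^2 by norm_num, Real.log_pow]; push_cast; ring
          _ ≤ Real.log x := Real.log_le_log (by norm_num) h4
      have hπ := lower_real (n := n) (by omega)
      have hπ' : 2*(n:ℝ) * Real.log 2 ≤ (((2*n).primeCounting : ℝ) + 1) * Real.log (2*(n:ℝ)) := by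
        push_cast at hπ ⊢; convert hπ using 3 <;> ring
      have hmono : ((2*n).primeCounting : ℝ) ≤ (m.primeCounting : ℝ) := by
        exact_mod_cast Nat.monotone_primeCounting h2nm
      have key : Real.log 2 * x / Real.log x ≤
          (2*(n:ℝ) * Real.log 2 + Real.log (2*(n:ℝ))) / Real.log (2*(n:ℝ)) := by
        rw [div_le_div_iff₀ hlx hB]
        nlinarith [mul_nonneg (mul_nonneg (by positivity : (0:ℝ) ≤ 2*(n:ℝ)) hl2.le) (sub_nonneg.2 hBA),
          mul_nonneg hl2.le hB.le]
      have hq : (2*(n:ℝ) * Real.log 2 + Real.log (2*(n:ℝ))) / Real.log (2*(n:ℝ))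
          ≤ (((2*n).primeCounting : ℝ) + 1) + 1 := by
        rw [div_le_iff₀ hB]
        nlinarith
      linarith
  · -- upper bound
    rcases lt_or_ge m 3 with h3 | h3
    · have hmeq : m = 2 := by omega
      have hπ2 : (m.primeCounting : ℝ) = 1 := by
        rw [hmeq]
        norm_num [Nat.primeCounting, Nat.primeCounting', Nat.count_succ]
      have hlogb : (1:ℝ) ≤ Real.logb 2 x := by
        rw [show (1:ℝ) = Real.logb 2 2 by simp]
        exact Real.logb_le_logb_of_le (by norm_num) (by norm_num) hx
      have : (0:ℝ) ≤ 4 * Real.log 2 * x / Real.log x := by positivity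
      linarith
    · have hu := upper_nat m (by omega)
      have hm3 : (3:ℝ) ≤ m := by exact_mod_cast h3
      obtain ⟨hpos, hmono⟩ := div_log_mono hm3 hmx
      have h1 : 4 * Real.log 2 * m / Real.log m ≤ 4 * Real.log 2 * x / Real.log x := by
        rw [mul_div_assoc, mul_div_assoc]
        exact mul_le_mul_of_nonneg_left hmono (by positivity)
      have h2 : Real.logb 2 (m:ℝ) ≤ Real.logb 2 x :=
        Real.logb_le_logb_of_le (by norm_num) (by linarith) hmx
      linarith
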